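/- Define f₁ : ℝ → ℝ by f₁(u) = |u|^{−1/2}·u·(1 + (1/10)·sin|u|) for u ≠ 0 and f₁(0) = 0, and set F₁(u) = ∫₀^u f₁(s) ds = (2/3)|u|^{3/2} + (1/10)·∫₀^u |s|^{1/2}·sin(s) ds. Then for every u ∈ ℝ with u ≠ 0, u·f₁(u) − 2·F₁(u) < 0. -/
import Mathlib

open Real MeasureTheory intervalIntegral

private lemma habs_cont : Continuous (fun s : ℝ => |s| ^ ((1:ℝ)/2)) :=
  continuous_abs.rpow_const (fun _ => Or.inr (by norm_num))

private lemma hg_pos {s : ℝ} (hs : 0 ≤ s) :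
    |s| ^ (-(1:ℝ)/2) * s = |s| ^ ((1:ℝ)/2) := by
  rcases eq_or_lt_of_le hs with h | h
  · simp [← h, Real.zero_rpow]
  · rw [abs_of_pos h]
    have h2 := Real.rpow_add h (-(1:ℝ)/2) 1
    rw [Real.rpow_one] at h2
    rw [← h2]; norm_num

private lemma hg_neg {s : ℝ} (hs : s ≤ 0) :
    |s| ^ (-(1:ℝ)/2) * s = -(|s| ^ ((1:ℝ)/2)) := by
  have h := hg_pos (s := -s) (by linarith)
  rw [abs_neg] at h
  linarith

private lemma int_habs_nonneg {u : ℝ} (hu : 0 ≤ u) :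
    ∫ s in (0:ℝ)..u, |s| ^ ((1:ℝ)/2) = (2/3) * |u| ^ ((3:ℝ)/2) := by
  have h1 : Set.EqOn (fun s : ℝ => |s| ^ ((1:ℝ)/2)) (fun s : ℝ => s ^ ((1:ℝ)/2))
      (Set.uIcc (0:ℝ) u) := by
    intro s hs
    rw [Set.uIcc_of_le hu] at hs
    simp [abs_of_nonneg hs.1]
  rw [intervalIntegral.integral_congr h1, integral_rpow (Or.inl (by norm_num)),
    abs_of_nonneg hu, Real.zero_rpow (by norm_num)]
  norm_num
  ring

private lemma int_g (u : ℝ) :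
    ∫ s in (0:ℝ)..u, |s| ^ (-(1:ℝ)/2) * s = (2/3) * |u| ^ ((3:ℝ)/2) := by
  have key : ∀ v : ℝ, 0 ≤ v →
      ∫ s in (0:ℝ)..v, |s| ^ (-(1:ℝ)/2) * s = (2/3) * |v| ^ ((3:ℝ)/2) := by
    intro v hv
    have h1 : Set.EqOn (fun s : ℝ => |s| ^ (-(1:ℝ)/2) * s) (fun s : ℝ => |s| ^ ((1:ℝ)/2))
        (Set.uIcc (0:ℝ) v) := by
      intro s hs
      rw [Set.uIcc_of_le hv] at hs
      exact hg_pos hs.1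
    rw [intervalIntegral.integral_congr h1, int_habs_nonneg hv]
  rcases le_or_gt 0 u with hu | hu
  · exact key u hu
  · have h := key (-u) (by linarith)
    rw [abs_neg] at h
    have hcomp := intervalIntegral.integral_comp_neg (a := (0:ℝ)) (b := -u)
      (f := fun s : ℝ => |s| ^ (-(1:ℝ)/2) * s)
    have hodd : ∀ x : ℝ, |(-x)| ^ (-(1:ℝ)/2) * (-x) = -(|x| ^ (-(1:ℝ)/2) * x) := by
      intro x; rw [abs_neg]; ring
    simp only [hodd, intervalIntegral.integral_neg, neg_zero] at hcomp
    rw [neg_neg] at hcomp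
    rw [intervalIntegral.integral_symm (0:ℝ) u] at hcomp
    linarith

private lemma intg_integrable (u : ℝ) :
    IntervalIntegrable (fun s : ℝ => |s| ^ (-(1:ℝ)/2) * s) volume 0 u := by
  rcases le_or_gt 0 u with hu | hu
  · apply ContinuousOn.intervalIntegrable
    apply habs_cont.continuousOn.congr
    intro s hs
    rw [Set.uIcc_of_le hu] at hs
    exact hg_pos hs.1
  · apply ContinuousOn.intervalIntegrable
    apply habs_cont.neg.continuousOn.congr
    intro s hs
    rw [Set.uIcc_of_ge hu.le] at hs
    exact hg_neg hs.2

private lemma int_I_bound (u : ℝ) :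
    |∫ s in (0:ℝ)..u, |s| ^ ((1:ℝ)/2) * Real.sin s| ≤ (2/3) * |u| ^ ((3:ℝ)/2) := by
  have hnorm : ∀ s : ℝ, ‖|s| ^ ((1:ℝ)/2) * Real.sin s‖ ≤ |s| ^ ((1:ℝ)/2) := by
    intro s
    rw [norm_mul, Real.norm_eq_abs, Real.norm_eq_abs,
      abs_of_nonneg (Real.rpow_nonneg (abs_nonneg s) _)]
    exact mul_le_of_le_one_right (Real.rpow_nonneg (abs_nonneg s) _) (Real.abs_sin_le_one s)
  have hint1 : IntervalIntegrable (fun s : ℝ => ‖|s| ^ ((1:ℝ)/2) * Real.sin s‖) volume 0 u :=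
    ((habs_cont.mul Real.continuous_sin).norm).intervalIntegrable 0 u
  have hint2 : IntervalIntegrable (fun s : ℝ => |s| ^ ((1:ℝ)/2)) volume 0 u :=
    habs_cont.intervalIntegrable 0 u
  rw [← Real.norm_eq_abs (∫ s in (0:ℝ)..u, |s| ^ ((1:ℝ)/2) * Real.sin s)]
  rcases le_or_gt 0 u with hu | hu
  · calc ‖∫ s in (0:ℝ)..u, |s| ^ ((1:ℝ)/2) * Real.sin s‖
        ≤ ∫ s in (0:ℝ)..u, ‖|s| ^ ((1:ℝ)/2) * Real.sin s‖ :=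
          intervalIntegral.norm_integral_le_integral_norm hu
      _ ≤ ∫ s in (0:ℝ)..u, |s| ^ ((1:ℝ)/2) :=
          intervalIntegral.integral_mono_on hu hint1 hint2 (fun s _ => hnorm s)
      _ = (2/3) * |u| ^ ((3:ℝ)/2) := int_habs_nonneg hu
  · have hsym : (∫ s in (0:ℝ)..u, |s| ^ ((1:ℝ)/2) * Real.sin s)
        = -∫ s in u..(0:ℝ), |s| ^ ((1:ℝ)/2) * Real.sin s :=
      (intervalIntegral.integral_symm u 0)
    have habs_int : ∫ s in u..(0:ℝ), |s| ^ ((1:ℝ)/2) = (2/3) * |u| ^ ((3:ℝ)/2) := by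
      have hcomp := intervalIntegral.integral_comp_neg (a := (0:ℝ)) (b := -u)
        (f := fun s : ℝ => |s| ^ ((1:ℝ)/2))
      simp only [abs_neg] at hcomp
      rw [neg_neg, neg_zero] at hcomp
      rw [← hcomp, int_habs_nonneg (by linarith : (0:ℝ) ≤ -u), abs_neg]
    rw [hsym, norm_neg]
    calc ‖∫ s in u..(0:ℝ), |s| ^ ((1:ℝ)/2) * Real.sin s‖
        ≤ ∫ s in u..(0:ℝ), ‖|s| ^ ((1:ℝ)/2) * Real.sin s‖ :=
          intervalIntegral.norm_integral_le_integral_norm hu.le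
      _ ≤ ∫ s in u..(0:ℝ), |s| ^ ((1:ℝ)/2) :=
          intervalIntegral.integral_mono_on hu.le hint1.symm hint2.symm (fun s _ => hnorm s)
      _ = (2/3) * |u| ^ ((3:ℝ)/2) := habs_int

theorem stmt15
    (f₁ : ℝ → ℝ)
    (hf₁ : ∀ u : ℝ, u ≠ 0 →
      f₁ u = |u| ^ (-(1:ℝ)/2) * u * (1 + (1/10 : ℝ) * Real.sin |u|))
    (hf₁0 : f₁ 0 = 0)
    (F₁ : ℝ → ℝ)
    (hF₁ : ∀ u : ℝ, F₁ u = ∫ s in (0:ℝ)..u, f₁ s) :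
    ∀ u : ℝ,
      (F₁ u = (2/3 : ℝ) * |u| ^ ((3:ℝ)/2)
        + (1/10 : ℝ) * ∫ s in (0:ℝ)..u, |s| ^ ((1:ℝ)/2) * Real.sin s) ∧
      (u ≠ 0 → u * f₁ u - 2 * F₁ u < 0) := by
  have hdecomp : ∀ s : ℝ, f₁ s
      = |s| ^ (-(1:ℝ)/2) * s + (1/10) * (|s| ^ ((1:ℝ)/2) * Real.sin s) := by
    intro s
    rcases eq_or_ne s 0 with rfl | hs
    · simp [hf₁0, Real.zero_rpow]
    · rw [hf₁ s hs]
      have hkey : |s| ^ (-(1:ℝ)/2) * s * Real.sin |s| = |s| ^ ((1:ℝ)/2) * Real.sin s := by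
        rcases lt_or_gt_of_ne hs with h | h
        · rw [hg_neg h.le, abs_of_neg h, Real.sin_neg]; ring
        · rw [hg_pos h.le, abs_of_pos h]
      linear_combination (1/10 : ℝ) * hkey
  have hI_int : ∀ u : ℝ, IntervalIntegrable
      (fun s : ℝ => |s| ^ ((1:ℝ)/2) * Real.sin s) volume 0 u :=
    fun u => (habs_cont.mul Real.continuous_sin).intervalIntegrable 0 u
  have hFeq : ∀ u : ℝ, F₁ u = (2/3 : ℝ) * |u| ^ ((3:ℝ)/2)
      + (1/10 : ℝ) * ∫ s in (0:ℝ)..u, |s| ^ ((1:ℝ)/2) * Real.sin s := by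
    intro u
    rw [hF₁ u, intervalIntegral.integral_congr
        (g := fun s : ℝ => |s| ^ (-(1:ℝ)/2) * s + (1/10) * (|s| ^ ((1:ℝ)/2) * Real.sin s))
        (fun s _ => hdecomp s),
      intervalIntegral.integral_add (intg_integrable u) ((hI_int u).const_mul _),
      intervalIntegral.integral_const_mul, int_g]
  intro u
  refine ⟨hFeq u, fun hu => ?_⟩
  have hpos : (0:ℝ) < |u| := abs_pos.2 hu
  have hA : 0 < |u| ^ ((3:ℝ)/2) := Real.rpow_pos_of_pos hpos _
  have hIb := int_I_bound u
  rw [hf₁ u hu, hFeq u]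
  have huf : u * (|u| ^ (-(1:ℝ)/2) * u * (1 + (1/10 : ℝ) * Real.sin |u|))
      = |u| ^ ((3:ℝ)/2) * (1 + (1/10 : ℝ) * Real.sin |u|) := by
    have h2 : |u| ^ ((2:ℝ)) = u * u := by
      rw [show ((2:ℝ)) = ((2:ℕ):ℝ) by norm_num, Real.rpow_natCast, sq_abs, sq]
    have h3 : |u| ^ (-(1:ℝ)/2) * |u| ^ ((2:ℝ)) = |u| ^ ((3:ℝ)/2) := by
      rw [← Real.rpow_add hpos]; norm_num
    rw [h2] at h3
    linear_combination (1 + (1/10 : ℝ) * Real.sin |u|) * h3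
  rw [huf]
  have hs1 : Real.sin |u| ≤ 1 := Real.sin_le_one _
  have hI1 := (abs_le.mp hIb).1
  nlinarith [mul_le_mul_of_nonneg_left hs1 hA.le]
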